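/- For every p ∈ ℝ³ with p ≠ 0, the kernel of the linear endomorphism of ℂ¹⁶ given by the matrix M⁻·p has dimension 8. -/

import Mathlib

noncomputable section
open MeasureTheory Matrix Complex Filter Topology
open scoped Kronecker ENNReal InnerProductSpace RealInnerProductSpace

/-- Pauli matrices -/
def σ1 : Matrix (Fin 2) (Fin 2) ℂ := !![0, 1; 1, 0]
def σ2 : Matrix (Fin 2) (Fin 2) ℂ := !![0, -I; I, 0]
def σ3 : Matrix (Fin 2) (Fin 2) ℂ := !![1, 0; 0, -1]

/-- Dirac alpha matrices in standard representation -/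
def diracAlpha' (s : Matrix (Fin 2) (Fin 2) ℂ) : Matrix (Fin 4) (Fin 4) ℂ :=
  Matrix.reindex finSumFinEquiv finSumFinEquiv (Matrix.fromBlocks 0 s s 0)

def diracAlpha : Fin 3 → Matrix (Fin 4) (Fin 4) ℂ
  | 0 => diracAlpha' σ1
  | 1 => diracAlpha' σ2
  | 2 => diracAlpha' σ3

def diracBeta : Matrix (Fin 4) (Fin 4) ℂ :=
  Matrix.reindex finSumFinEquiv finSumFinEquiv
    (Matrix.fromBlocks (1 : Matrix (Fin 2) (Fin 2) ℂ) 0 0 (-1 : Matrix (Fin 2) (Fin 2) ℂ))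

abbrev R3 := EuclideanSpace ℝ (Fin 3)
abbrev C16 := EuclideanSpace ℂ (Fin 16)

/-- α·p -/
def alphaDot (p : R3) : Matrix (Fin 4) (Fin 4) ℂ :=
  ∑ j : Fin 3, (p j : ℂ) • diracAlpha j

/-- reindexing 4×4 Kronecker products to 16×16 matrices -/
def kron16 (A B : Matrix (Fin 4) (Fin 4) ℂ) : Matrix (Fin 16) (Fin 16) ℂ :=
  Matrix.reindex finProdFinEquiv finProdFinEquiv (A ⊗ₖ B)

/-- M⁻·p -/
def Mminus (p : R3) : Matrix (Fin 16) (Fin 16) ℂ :=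
  kron16 (alphaDot p) 1 - kron16 1 (alphaDot p)

/-- P·M⁺ -/
def MplusDot (P : R3) : Matrix (Fin 16) (Fin 16) ℂ :=
  (2⁻¹ : ℂ) • (kron16 (alphaDot P) 1 + kron16 1 (alphaDot P))

/-- τ(p) -/
def tau (p : R3) : Matrix (Fin 16) (Fin 16) ℂ :=
  -((‖p‖ ^ 2 : ℝ) : ℂ)⁻¹ • kron16 (alphaDot p) (alphaDot p)

def Pplus (p : R3) : Matrix (Fin 16) (Fin 16) ℂ := (2⁻¹ : ℂ) • (1 + tau p)
def Pminus (p : R3) : Matrix (Fin 16) (Fin 16) ℂ := (2⁻¹ : ℂ) • (1 - tau p)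

def Bmat : Matrix (Fin 16) (Fin 16) ℂ := (2 : ℂ) • kron16 diracBeta diracBeta

-- aux
lemma e0' : (finSumFinEquiv (m := 2) (n := 2)).symm 0 = Sum.inl 0 := by decide
lemma e1' : (finSumFinEquiv (m := 2) (n := 2)).symm 1 = Sum.inl 1 := by decide
lemma e2' : (finSumFinEquiv (m := 2) (n := 2)).symm 2 = Sum.inr 0 := by decide
lemma e3' : (finSumFinEquiv (m := 2) (n := 2)).symm 3 = Sum.inr 1 := by decide

lemma diracAlpha'_eq (s : Matrix (Fin 2) (Fin 2) ℂ) : diracAlpha' s =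
    !![0, 0, s 0 0, s 0 1;
       0, 0, s 1 0, s 1 1;
       s 0 0, s 0 1, 0, 0;
       s 1 0, s 1 1, 0, 0] := by
  unfold diracAlpha'
  ext i j
  fin_cases i <;> fin_cases j <;>
    simp [Matrix.reindex_apply, Matrix.submatrix_apply, e0', e1', e2', e3',
      Matrix.vecHead, Matrix.vecTail]

lemma alphaDot_eq (p : R3) : alphaDot p =
    !![0, 0, (p 2 : ℂ), (p 0 : ℂ) - (p 1 : ℂ) * I;
       0, 0, (p 0 : ℂ) + (p 1 : ℂ) * I, -(p 2 : ℂ);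
       (p 2 : ℂ), (p 0 : ℂ) - (p 1 : ℂ) * I, 0, 0;
       (p 0 : ℂ) + (p 1 : ℂ) * I, -(p 2 : ℂ), 0, 0] := by
  have h0 : diracAlpha 0 = diracAlpha' σ1 := rfl
  have h1 : diracAlpha 1 = diracAlpha' σ2 := rfl
  have h2 : diracAlpha 2 = diracAlpha' σ3 := rfl
  rw [alphaDot, Fin.sum_univ_three, h0, h1, h2, diracAlpha'_eq, diracAlpha'_eq, diracAlpha'_eq]
  unfold σ1 σ2 σ3
  ext i j
  fin_cases i <;> fin_cases j <;> simp [Matrix.vecHead, Matrix.vecTail] <;> ring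

lemma norm_sq_eq (p : R3) :
    ((‖p‖ ^ 2 : ℝ) : ℂ) = (p 0 : ℂ)^2 + (p 1 : ℂ)^2 + (p 2 : ℂ)^2 := by
  have h : ‖p‖ ^ 2 = (p 0)^2 + (p 1)^2 + (p 2)^2 := by
    rw [EuclideanSpace.norm_eq, Real.sq_sqrt (by positivity)]
    simp [Fin.sum_univ_three, Real.norm_eq_abs, sq_abs]
  rw [h]; push_cast; ring

lemma alphaDot_sq (p : R3) :
    alphaDot p * alphaDot p = ((‖p‖ ^ 2 : ℝ) : ℂ) • 1 := by
  rw [alphaDot_eq, norm_sq_eq]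
  ext i j
  fin_cases i <;> fin_cases j <;>
    simp [Matrix.mul_apply, Fin.sum_univ_four, Matrix.one_apply, Matrix.vecHead,
      Matrix.vecTail] <;> ring_nf <;> simp [Complex.I_sq] <;> ring

lemma alphaDot_trace (p : R3) : Matrix.trace (alphaDot p) = 0 := by
  rw [alphaDot_eq]; simp [Matrix.trace, Fin.sum_univ_four, Matrix.vecHead, Matrix.vecTail]

lemma kron16_mul (A B C D : Matrix (Fin 4) (Fin 4) ℂ) :
    kron16 A B * kron16 C D = kron16 (A * C) (B * D) := by
  simp [kron16, Matrix.reindex_apply, Matrix.submatrix_mul_equiv, Matrix.mul_kronecker_mul]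

lemma kron16_one : kron16 1 1 = 1 := by
  simp [kron16, Matrix.one_kronecker_one, Matrix.reindex_apply, Matrix.submatrix_one_equiv]

lemma kron16_smul_left (c : ℂ) (A B : Matrix (Fin 4) (Fin 4) ℂ) :
    kron16 (c • A) B = c • kron16 A B := by
  simp [kron16, Matrix.smul_kronecker, Matrix.submatrix_smul]

lemma kron16_smul_right (c : ℂ) (A B : Matrix (Fin 4) (Fin 4) ℂ) :
    kron16 A (c • B) = c • kron16 A B := by
  simp [kron16, Matrix.kronecker_smul, Matrix.submatrix_smul]

lemma kron16_trace (A B : Matrix (Fin 4) (Fin 4) ℂ) :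
    Matrix.trace (kron16 A B) = Matrix.trace A * Matrix.trace B := by
  have h : Matrix.trace (kron16 A B) = Matrix.trace (A ⊗ₖ B) := by
    simp only [kron16, Matrix.reindex_apply, Matrix.trace, Matrix.diag_apply,
      Matrix.submatrix_apply]
    exact Fintype.sum_equiv finProdFinEquiv.symm
      (fun i => (A ⊗ₖ B) (finProdFinEquiv.symm i) (finProdFinEquiv.symm i))
      (fun ij => (A ⊗ₖ B) ij ij) (fun i => rfl)
  rw [h, Matrix.trace_kronecker]

/-- STATEMENT 2: for `p ≠ 0`, the kernel of the linear endomorphism of `ℂ¹⁶` given by the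
matrix `M⁻·p` has dimension `8`. -/
theorem stmt2 (p : R3) (hp : p ≠ 0) :
    Module.finrank ℂ (LinearMap.ker (Matrix.toEuclideanLin (Mminus p))) = 8 := by
  set A := alphaDot p with hA
  set c : ℂ := ((‖p‖ ^ 2 : ℝ) : ℂ) with hcdef
  have hc : c ≠ 0 := by
    rw [hcdef, ne_eq, Complex.ofReal_eq_zero]
    exact pow_ne_zero 2 (norm_ne_zero_iff.mpr hp)
  have hAA : A * A = c • 1 := alphaDot_sq p
  set K : Matrix (Fin 16) (Fin 16) ℂ := kron16 A A with hK
  set M : Matrix (Fin 16) (Fin 16) ℂ := Mminus p with hM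
  have hMeq : M = kron16 A 1 - kron16 1 A := rfl
  -- key matrix identities
  have hKK : K * K = (c * c) • 1 := by
    rw [hK, kron16_mul, hAA, kron16_smul_left, kron16_smul_right, kron16_one, smul_smul]
  have hMM : M * M = (2 * c) • 1 - (2 : ℂ) • K := by
    rw [hMeq]
    simp only [sub_mul, mul_sub, kron16_mul, one_mul, mul_one, hAA, kron16_smul_left,
      kron16_smul_right, kron16_one, ← hK]
    module
  have hMK : M * K = (-c) • M := by
    rw [hMeq, hK]
    simp only [sub_mul, kron16_mul, one_mul, mul_one, hAA, kron16_smul_left,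
      kron16_smul_right]
    module
  have htrK : Matrix.trace K = 0 := by
    rw [hK, kron16_trace, alphaDot_trace, mul_zero]
  set P : Matrix (Fin 16) (Fin 16) ℂ := (2 * c)⁻¹ • (K + c • 1) with hP
  have hMP : M * P = 0 := by
    rw [hP, Matrix.mul_smul, mul_add, hMK, Matrix.mul_smul, mul_one]
    rw [smul_add, ← smul_assoc, ← smul_assoc]
    simp [neg_smul]
  have hPP : P * P = P := by
    rw [hP]
    simp only [Matrix.smul_mul, Matrix.mul_smul, add_mul, mul_add, hKK, one_mul, mul_one]
    match_scalars <;> field_simp <;> ring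
  have htrP : Matrix.trace P = 8 := by
    rw [hP, Matrix.trace_smul, Matrix.trace_add, htrK, Matrix.trace_smul, Matrix.trace_one]
    simp only [zero_add, smul_eq_mul, Fintype.card_fin]
    field_simp
    ring
  -- move to linear maps
  set b : Module.Basis (Fin 16) ℂ C16 := (EuclideanSpace.basisFun (Fin 16) ℂ).toBasis with hb
  have hlin : ∀ X : Matrix (Fin 16) (Fin 16) ℂ, Matrix.toEuclideanLin X = Matrix.toLin b b X := by
    intro X
    rw [Matrix.toEuclideanLin_eq_toLin_orthonormal]
  set L := Matrix.toEuclideanLin M with hL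
  set Q := Matrix.toEuclideanLin P with hQ
  have hcomp : ∀ X Y : Matrix (Fin 16) (Fin 16) ℂ,
      Matrix.toEuclideanLin (X * Y) = (Matrix.toEuclideanLin X) ∘ₗ (Matrix.toEuclideanLin Y) := by
    intro X Y
    rw [hlin, hlin, hlin]
    exact Matrix.toLin_mul b b b X Y
  have hproj : LinearMap.IsProj (LinearMap.ker L) Q := by
    constructor
    · intro x
      have : L (Q x) = 0 := by
        have h := congrFun (congrArg DFunLike.coe (hcomp M P)) x
        rw [hMP] at h
        simpa using h.symm
      simpa [LinearMap.mem_ker] using this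
    · intro x hx
      rw [LinearMap.mem_ker] at hx
      have hone : Matrix.toEuclideanLin (1 : Matrix (Fin 16) (Fin 16) ℂ) = LinearMap.id := by
        rw [hlin, Matrix.toLin_one]
      have hKx : (Matrix.toEuclideanLin K) x = c • x := by
        have h2 : Matrix.toEuclideanLin (M * M) x = 0 := by
          rw [hcomp]
          simp only [LinearMap.comp_apply, ← hL, hx, map_zero]
        rw [hMM] at h2
        have h3 : Matrix.toEuclideanLin ((2*c) • (1 : Matrix (Fin 16) (Fin 16) ℂ)) x
            - Matrix.toEuclideanLin ((2:ℂ) • K) x = 0 := by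
          rw [← LinearMap.sub_apply, ← map_sub]; exact h2
        rw [_root_.map_smul, _root_.map_smul, hone] at h3
        simp only [LinearMap.smul_apply, LinearMap.id_apply] at h3
        have h4 : (2:ℂ) • (Matrix.toEuclideanLin K) x = (2:ℂ) • (c • x) := by
          rw [smul_smul]
          rw [← sub_eq_zero]; rw [sub_eq_zero] at h3 ⊢; exact h3.symm
        exact smul_right_injective _ (two_ne_zero (α := ℂ)) h4
      have h2c : (2 * c : ℂ) ≠ 0 := mul_ne_zero (two_ne_zero (α := ℂ)) hc
      rw [hQ, hP, _root_.map_smul, map_add, _root_.map_smul, hone]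
      simp only [LinearMap.smul_apply, LinearMap.add_apply, LinearMap.id_apply, hKx]
      rw [← add_smul, smul_smul, show c + c = 2 * c by ring,
        inv_mul_cancel₀ h2c, one_smul]
  have htr : LinearMap.trace ℂ C16 Q = 8 := by
    rw [hQ, hlin, LinearMap.trace_eq_matrix_trace ℂ b, LinearMap.toMatrix_toLin, htrP]
  have hfinal := hproj.trace
  rw [htr] at hfinal
  have : ((Module.finrank ℂ (LinearMap.ker L) : ℂ)) = ((8 : ℕ) : ℂ) := by
    rw [← hfinal]; norm_num
  exact_mod_cast this
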